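/- Let a < b, let Γ : [a,b] → ℝ be twice differentiable with |Γ''(s)| ≤ K for all s ∈ [a,b], let t₀ ∈ [a,b] be a point where |Γ| attains its minimum over [a,b], and let m > 0 satisfy |Γ'(t₀)| ≥ m and K(b−a) ≤ m. Then |Γ(s)| ≥ (m/2)|s − t₀| for all s ∈ [a,b]. (This is the abstract form of Lemma 3 of the paper: applied to Γ(s) = X₁(s) − Y₁(s), the difference of the first spatial components of two characteristics of the partial dynamics, whose second derivative equals the difference of the electric fields along the two trajectories, it yields |X(s) − Y(s)| ≥ (h𝒱^{−η}/4)|s − t₀|.) -/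

import Mathlib

noncomputable section
open Set

private lemma key_lemma3
    (a b : ℝ) (Γ Γ' Γ'' : ℝ → ℝ)
    (hΓ : ∀ s ∈ Icc a b, HasDerivAt Γ (Γ' s) s)
    (hΓ' : ∀ s ∈ Icc a b, HasDerivAt Γ' (Γ'' s) s)
    (K m : ℝ) (hK : 0 ≤ K) (hm : 0 < m)
    (hΓ'' : ∀ s ∈ Icc a b, |Γ'' s| ≤ K)
    (t₀ : ℝ) (ht₀ : t₀ ∈ Icc a b)
    (hmin : ∀ s ∈ Icc a b, |Γ t₀| ≤ |Γ s|)
    (hslope : m ≤ Γ' t₀)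
    (hsmall : K * (b - a) ≤ m)
    (s : ℝ) (hs : s ∈ Icc a b) (hts : t₀ ≤ s) :
    (m / 2) * (s - t₀) ≤ |Γ s| := by
  rcases eq_or_lt_of_le hts with rfl | hlt
  · simp [abs_nonneg]
  -- Step 1 : Γ t₀ ≥ 0
  have hΓt₀ : 0 ≤ Γ t₀ := by
    by_contra hneg
    push_neg at hneg
    have hsq : HasDerivAt (fun x => Γ x ^ 2) ((2 : ℕ) * Γ t₀ ^ 1 * Γ' t₀) t₀ :=
      (hΓ t₀ ht₀).pow 2
    have hc : ((2 : ℕ) : ℝ) * Γ t₀ ^ 1 * Γ' t₀ < 0 := by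
      push_cast; nlinarith
    rw [hasDerivAt_iff_tendsto_slope] at hsq
    have h1 : ∀ᶠ x in nhdsWithin t₀ {t₀}ᶜ, slope (fun x => Γ x ^ 2) t₀ x < 0 :=
      hsq (Iio_mem_nhds hc)
    have hmono : nhdsWithin t₀ (Ioi t₀) ≤ nhdsWithin t₀ {t₀}ᶜ :=
      nhdsWithin_mono _ (fun x hx => ne_of_gt hx)
    have h2 : ∀ᶠ x in nhdsWithin t₀ (Ioi t₀), slope (fun x => Γ x ^ 2) t₀ x < 0 :=
      h1.filter_mono hmono
    have h3 : ∀ᶠ x in nhdsWithin t₀ (Ioi t₀), x ∈ Ioo t₀ s :=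
      Ioo_mem_nhdsGT_of_mem ⟨le_refl _, hlt⟩
    obtain ⟨x, hx1, hx2⟩ := (h2.and h3).exists
    have hxI : x ∈ Icc a b := ⟨le_trans ht₀.1 hx2.1.le, le_trans hx2.2.le hs.2⟩
    have hmx := hmin x hxI
    have hp : 0 < x - t₀ := sub_pos.2 hx2.1
    rw [slope_def_field] at hx1
    have h4 : (Γ x ^ 2 - Γ t₀ ^ 2) / (x - t₀) < 0 := by
      have : (Γ x ^ 2 - Γ t₀ ^ 2) / (x - t₀) = (Γ x ^ 2 - Γ t₀ ^ 2) / (x - t₀) := rfl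
      calc (Γ x ^ 2 - Γ t₀ ^ 2) / (x - t₀) = ((fun x => Γ x ^ 2) x - (fun x => Γ x ^ 2) t₀) / (x - t₀) := by norm_num
        _ < 0 := hx1
    have h5 : Γ x ^ 2 - Γ t₀ ^ 2 < 0 * (x - t₀) := (div_lt_iff₀ hp).mp h4
    nlinarith [sq_abs (Γ x), sq_abs (Γ t₀), abs_nonneg (Γ t₀)]
  -- Step 2 : |Γ' x - Γ' t₀| ≤ K * |x - t₀| on [a,b]
  have hbd : ∀ x ∈ Icc a b, |Γ' x - Γ' t₀| ≤ K * |x - t₀| := by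
    intro x hx
    have := Convex.norm_image_sub_le_of_norm_hasDerivWithin_le
      (f := Γ') (f' := Γ'')
      (fun y hy => (hΓ' y hy).hasDerivWithinAt)
      (fun y hy => by simpa [Real.norm_eq_abs] using hΓ'' y hy)
      (convex_Icc a b) ht₀ hx
    simpa [Real.norm_eq_abs] using this
  -- Step 3 : comparison function g
  set g : ℝ → ℝ := fun x => Γ x - m * (x - t₀) + K * (x - t₀) ^ 2 / 2 with hgdef
  have hg : ∀ x ∈ Icc a b, HasDerivAt g (Γ' x - m + K * (x - t₀)) x := by
    intro x hx
    have h1 : HasDerivAt (fun y : ℝ => y - t₀) 1 x := (hasDerivAt_id x).sub_const t₀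
    have h2 : HasDerivAt (fun y : ℝ => m * (y - t₀)) (m * 1) x := h1.const_mul m
    have h3 : HasDerivAt (fun y : ℝ => (y - t₀) ^ 2) ((2 : ℕ) * (x - t₀) ^ 1 * 1) x :=
      h1.pow 2
    have h4 : HasDerivAt (fun y : ℝ => K * (y - t₀) ^ 2 / 2)
        (K * ((2 : ℕ) * (x - t₀) ^ 1 * 1) / 2) x := (h3.const_mul K).div_const 2
    have h5 := ((hΓ x hx).sub h2).add h4
    refine h5.congr_deriv ?_
    push_cast; ring
  have hsub : Icc t₀ s ⊆ Icc a b := Icc_subset_Icc ht₀.1 hs.2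
  have hmono : MonotoneOn g (Icc t₀ s) := by
    apply monotoneOn_of_deriv_nonneg (convex_Icc t₀ s)
    · intro x hx
      exact (hg x (hsub hx)).continuousAt.continuousWithinAt
    · intro x hx
      rw [interior_Icc] at hx
      exact ((hg x (hsub (Ioo_subset_Icc_self hx))).differentiableAt).differentiableWithinAt
    · intro x hx
      rw [interior_Icc] at hx
      have hxab : x ∈ Icc a b := hsub (Ioo_subset_Icc_self hx)
      rw [(hg x hxab).deriv]
      have hb := abs_le.mp (hbd x hxab)
      have habs : |x - t₀| = x - t₀ := abs_of_nonneg (by linarith [hx.1])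
      rw [habs] at hb
      linarith [hb.1]
  have hgs : g t₀ ≤ g s :=
    hmono (left_mem_Icc.2 hts) (right_mem_Icc.2 hts) hts
  have hgt₀ : g t₀ = Γ t₀ := by simp [hgdef]
  have hKs : K * (s - t₀) ≤ m := by
    have h1 : K * (s - t₀) ≤ K * (b - a) := by
      apply mul_le_mul_of_nonneg_left _ hK
      have := ht₀.1; have := hs.2; linarith
    linarith
  have hfin : (m / 2) * (s - t₀) ≤ Γ s := by
    have hge : g s = Γ s - m * (s - t₀) + K * (s - t₀) ^ 2 / 2 := rfl
    rw [hge, hgt₀] at hgs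
    nlinarith [sub_nonneg.2 hts]
  exact le_trans hfin (le_abs_self _)

private lemma key_lemma3_abs
    (a b : ℝ) (Γ Γ' Γ'' : ℝ → ℝ)
    (hΓ : ∀ s ∈ Icc a b, HasDerivAt Γ (Γ' s) s)
    (hΓ' : ∀ s ∈ Icc a b, HasDerivAt Γ' (Γ'' s) s)
    (K m : ℝ) (hK : 0 ≤ K) (hm : 0 < m)
    (hΓ'' : ∀ s ∈ Icc a b, |Γ'' s| ≤ K)
    (t₀ : ℝ) (ht₀ : t₀ ∈ Icc a b)
    (hmin : ∀ s ∈ Icc a b, |Γ t₀| ≤ |Γ s|)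
    (hslope : m ≤ |Γ' t₀|)
    (hsmall : K * (b - a) ≤ m)
    (s : ℝ) (hs : s ∈ Icc a b) (hts : t₀ ≤ s) :
    (m / 2) * (s - t₀) ≤ |Γ s| := by
  rcases le_abs.mp hslope with h | h
  · exact key_lemma3 a b Γ Γ' Γ'' hΓ hΓ' K m hK hm hΓ'' t₀ ht₀ hmin h hsmall s hs hts
  · have := key_lemma3 a b (fun x => -Γ x) (fun x => -Γ' x) (fun x => -Γ'' x)
      (fun x hx => (hΓ x hx).neg) (fun x hx => (hΓ' x hx).neg) K m hK hm
      (fun x hx => by simpa using hΓ'' x hx) t₀ ht₀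
      (fun x hx => by simpa using hmin x hx) h hsmall s hs hts
    simpa using this

/-- Abstract form of Lemma 3 of the paper: if `Γ` is twice differentiable on `[a,b]` with
`|Γ''| ≤ K`, `t₀` is a minimum point of `|Γ|` on `[a,b]`, `|Γ'(t₀)| ≥ m > 0` and
`K(b-a) ≤ m`, then `|Γ(s)| ≥ (m/2)|s - t₀|` on `[a,b]`. -/
theorem lower_bound_from_min_velocity_gap
    (a b : ℝ) (hab : a < b) (Γ Γ' Γ'' : ℝ → ℝ)
    (hΓ : ∀ s ∈ Icc a b, HasDerivAt Γ (Γ' s) s)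
    (hΓ' : ∀ s ∈ Icc a b, HasDerivAt Γ' (Γ'' s) s)
    (K m : ℝ) (hK : 0 ≤ K) (hm : 0 < m)
    (hΓ'' : ∀ s ∈ Icc a b, |Γ'' s| ≤ K)
    (t₀ : ℝ) (ht₀ : t₀ ∈ Icc a b)
    (hmin : ∀ s ∈ Icc a b, |Γ t₀| ≤ |Γ s|)
    (hslope : m ≤ |Γ' t₀|)
    (hsmall : K * (b - a) ≤ m) :
    ∀ s ∈ Icc a b, (m / 2) * |s - t₀| ≤ |Γ s| := by
  intro s hs
  rcases le_total t₀ s with h | h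
  · rw [abs_of_nonneg (sub_nonneg.2 h)]
    exact key_lemma3_abs a b Γ Γ' Γ'' hΓ hΓ' K m hK hm hΓ'' t₀ ht₀ hmin hslope hsmall s hs h
  · -- reflection x ↦ a + b - x
    set c := a + b with hc
    have hmem : ∀ x, x ∈ Icc a b → c - x ∈ Icc a b := by
      intro x hx
      exact ⟨by linarith [hx.2], by linarith [hx.1]⟩
    have hcancel : ∀ x : ℝ, c - (c - x) = x := by intro x; ring
    have hΔ : ∀ x ∈ Icc a b, HasDerivAt (fun y => Γ (c - y)) (-Γ' (c - x)) x := by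
      intro x hx
      have h0 : HasDerivAt (fun y : ℝ => c - y) (-1) x := (hasDerivAt_id x).const_sub c
      have := (hΓ (c - x) (hmem x hx)).comp x h0
      refine this.congr_deriv ?_
      ring
    have hΔ' : ∀ x ∈ Icc a b, HasDerivAt (fun y => -Γ' (c - y)) (Γ'' (c - x)) x := by
      intro x hx
      have h0 : HasDerivAt (fun y : ℝ => c - y) (-1) x := (hasDerivAt_id x).const_sub c
      have := ((hΓ' (c - x) (hmem x hx)).comp x h0).neg
      refine this.congr_deriv ?_
      ring
    have ht₀' : c - t₀ ∈ Icc a b := hmem t₀ ht₀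
    have hs' : c - s ∈ Icc a b := hmem s hs
    have hmin' : ∀ u ∈ Icc a b, |Γ (c - (c - t₀))| ≤ |Γ (c - u)| := by
      intro u hu
      rw [hcancel t₀]
      exact hmin (c - u) (hmem u hu)
    have hslope' : m ≤ |-Γ' (c - (c - t₀))| := by
      rw [hcancel t₀, abs_neg]
      exact hslope
    have key := key_lemma3_abs a b (fun y => Γ (c - y)) (fun y => -Γ' (c - y))
      (fun y => Γ'' (c - y)) hΔ hΔ' K m hK hm
      (fun y hy => hΓ'' (c - y) (hmem y hy)) (c - t₀) ht₀' hmin' hslope' hsmall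
      (c - s) hs' (by linarith)
    have h1 : c - s - (c - t₀) = t₀ - s := by ring
    have h2 : c - (c - s) = s := hcancel s
    have key' : m / 2 * (t₀ - s) ≤ |Γ s| := by
      simpa [h1, h2] using key
    rw [abs_of_nonpos (by linarith : s - t₀ ≤ 0)]
    calc (m / 2) * -(s - t₀) = (m / 2) * (t₀ - s) := by ring
      _ ≤ |Γ s| := key'
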